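/- Let c > 0, D > 0, and let ν be a Borel measure on (0,∞) with Π(x) := ν((x,∞)). Suppose γ satisfies 0 < γ < c/D, ∫₀^∞ z e^{γ z} ν(dz) < ∞, and the Lundberg identity c γ − D γ² = ∫₀^∞ (e^{γ z} − 1) ν(dz). With k_D(x) = (c/D) e^{−(c/D) x} and g(u) = (1/c) ∫₀^u k_D(u − x) Π(x) dx, the mean of the tilted density equals μ := ∫₀^∞ x e^{γ x} g(x) dx = ( ∫₀^∞ z e^{γ z} ν(dz) − c + 2 D γ ) / ( γ (c − D γ) ). -/

import Mathlib

open MeasureTheory Set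

/-- The tail of the Lévy measure `ν`: `Π(x) = ν((x,∞))`. -/
noncomputable def nuTail (ν : Measure ℝ) (x : ℝ) : ℝ := (ν (Ioi x)).toReal

/-- The exponential density `k_D(x) = (c/D) e^{−(c/D)x}`. -/
noncomputable def kDens (c D x : ℝ) : ℝ := (c / D) * Real.exp (-(c / D) * x)

/-- The renewal kernel `g(u) = (1/c) ∫₀^u k_D(u−x) Π(x) dx`. -/
noncomputable def renKer (c D : ℝ) (ν : Measure ℝ) (u : ℝ) : ℝ :=
  (1 / c) * ∫ x in (0 : ℝ)..u, kDens c D (u - x) * nuTail ν x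

open Filter ENNReal

lemma meas_tail (ν : Measure ℝ) : Measurable fun y : ℝ => ν (Ioi y) :=
  Antitone.measurable (fun _ _ h => measure_mono (Ioi_subset_Ioi h))

/-- Tonelli-type swap for integrals against the tail of a measure. -/
lemma swap_tail (ν : Measure ℝ) [SigmaFinite ν] {f : ℝ → ℝ≥0∞} (hf : Measurable f) :
    ∫⁻ y in Ioi (0:ℝ), f y * ν (Ioi y)
      = ∫⁻ z in Ioi (0:ℝ), (∫⁻ y in Ioo 0 z, f y) ∂ν := by
  have key : ∀ p : ℝ × ℝ, (Ioi p.1).indicator (fun _ => (1:ℝ≥0∞)) p.2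
      = ({q : ℝ × ℝ | q.1 < q.2}).indicator (fun _ => (1:ℝ≥0∞)) p := by
    intro p
    by_cases h : p.1 < p.2 <;> simp [Set.indicator_apply, h]
  have hmeas : Measurable fun p : ℝ × ℝ =>
      f p.1 * (Ioi p.1).indicator (fun _ => (1:ℝ≥0∞)) p.2 := by
    have h1 : Measurable fun p : ℝ × ℝ =>
        (({q : ℝ × ℝ | q.1 < q.2}).indicator (fun _ => (1:ℝ≥0∞)) p) :=
      measurable_const.indicator (measurableSet_lt measurable_fst measurable_snd)
    simp only [key]
    exact (hf.comp measurable_fst).mul h1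
  calc ∫⁻ y in Ioi (0:ℝ), f y * ν (Ioi y)
      = ∫⁻ y in Ioi (0:ℝ), ∫⁻ z in Ioi (0:ℝ),
          f y * (Ioi y).indicator (fun _ => (1:ℝ≥0∞)) z ∂ν := by
        refine setLIntegral_congr_fun measurableSet_Ioi
          (fun y hy => ?_)
        have : ∫⁻ z in Ioi (0:ℝ), f y * (Ioi y).indicator (fun _ => (1:ℝ≥0∞)) z ∂ν
            = f y * ν (Ioi y) := by
          rw [lintegral_const_mul _ (measurable_const.indicator measurableSet_Ioi),
            lintegral_indicator measurableSet_Ioi, setLIntegral_one,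
            Measure.restrict_apply measurableSet_Ioi,
            Set.inter_eq_left.mpr (Ioi_subset_Ioi (le_of_lt hy))]
        exact this.symm
    _ = ∫⁻ z in Ioi (0:ℝ), ∫⁻ y in Ioi (0:ℝ),
          f y * (Ioi y).indicator (fun _ => (1:ℝ≥0∞)) z ∂volume ∂ν :=
        lintegral_lintegral_swap hmeas.aemeasurable
    _ = ∫⁻ z in Ioi (0:ℝ), (∫⁻ y in Ioo 0 z, f y) ∂ν := by
        refine lintegral_congr fun z => ?_
        have hpt : ∀ y : ℝ, f y * (Ioi y).indicator (fun _ => (1:ℝ≥0∞)) z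
            = (Iio z).indicator f y := by
          intro y
          by_cases h : y < z <;>
            simp [Set.indicator_apply, h, Set.mem_Ioi, Set.mem_Iio]
        simp_rw [hpt]
        rw [lintegral_indicator measurableSet_Iio,
          Measure.restrict_restrict measurableSet_Iio]
        congr 1
        rw [Set.inter_comm, Set.Ioi_inter_Iio]

lemma lint_z_lt_top {γ : ℝ} (hγ0 : 0 < γ) {ν : Measure ℝ}
    (hint : IntegrableOn (fun z => z * Real.exp (γ * z)) (Ioi (0:ℝ)) ν) :
    ∫⁻ z in Ioi (0:ℝ), ENNReal.ofReal z ∂ν < ⊤ := by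
  refine lt_of_le_of_lt ?_ hint.lintegral_lt_top
  refine setLIntegral_mono' measurableSet_Ioi fun z hz => ?_
  exact ENNReal.ofReal_le_ofReal
    (le_mul_of_one_le_right (le_of_lt hz) (Real.one_le_exp (le_of_lt (mul_pos hγ0 hz))))

lemma tail_lt_top {γ : ℝ} (hγ0 : 0 < γ) {ν : Measure ℝ}
    (hint : IntegrableOn (fun z => z * Real.exp (γ * z)) (Ioi (0:ℝ)) ν)
    {y : ℝ} (hy : 0 < y) : ν (Ioi y) < ⊤ := by
  have h1 : ν (Ioi y) * ENNReal.ofReal y ≤ ∫⁻ z in Ioi (0:ℝ), ENNReal.ofReal z ∂ν := by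
    calc ν (Ioi y) * ENNReal.ofReal y = ∫⁻ _ in Ioi y, ENNReal.ofReal y ∂ν := by
          rw [setLIntegral_const, mul_comm]
      _ ≤ ∫⁻ z in Ioi y, ENNReal.ofReal z ∂ν :=
          setLIntegral_mono' measurableSet_Ioi fun z hz =>
            ENNReal.ofReal_le_ofReal (le_of_lt hz)
      _ ≤ ∫⁻ z in Ioi (0:ℝ), ENNReal.ofReal z ∂ν :=
          lintegral_mono_set (Ioi_subset_Ioi (le_of_lt hy))
  by_contra h
  push_neg at h
  rw [top_le_iff.mp h, ENNReal.top_mul (ENNReal.ofReal_pos.mpr hy).ne'] at h1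
  exact (lint_z_lt_top hγ0 hint).ne (top_le_iff.mp h1)

lemma exp_sub_one_le_self_mul {t : ℝ} (ht : 0 ≤ t) :
    Real.exp t - 1 ≤ t * Real.exp t := by
  have h := Real.add_one_le_exp (-t)
  have h2 : Real.exp (-t) * Real.exp t = 1 := by
    rw [← Real.exp_add]; simp
  nlinarith [Real.exp_pos t]

lemma int_expm1 {γ : ℝ} (hγ0 : 0 < γ) {ν : Measure ℝ}
    (hint : IntegrableOn (fun z => z * Real.exp (γ * z)) (Ioi (0:ℝ)) ν) :
    IntegrableOn (fun z => Real.exp (γ * z) - 1) (Ioi (0:ℝ)) ν := by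
  refine (hint.const_mul γ).mono
    ((Real.continuous_exp.comp (continuous_const.mul continuous_id)).sub
      continuous_const).aestronglyMeasurable ?_
  refine (ae_restrict_iff' measurableSet_Ioi).2 (Filter.Eventually.of_forall fun z hz => ?_)
  have hz0 : (0:ℝ) < z := hz
  have h0 : (0:ℝ) ≤ Real.exp (γ * z) - 1 := by
    have := Real.one_le_exp (le_of_lt (mul_pos hγ0 hz0))
    linarith
  rw [Real.norm_eq_abs, Real.norm_eq_abs, abs_of_nonneg h0,
    abs_of_nonneg (by positivity)]
  calc Real.exp (γ * z) - 1 ≤ (γ * z) * Real.exp (γ * z) :=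
        exp_sub_one_le_self_mul (le_of_lt (mul_pos hγ0 hz0))
    _ = γ * (z * Real.exp (γ * z)) := by ring

lemma hasDeriv_F {β : ℝ} (hβ : β ≠ 0) (x : ℝ) :
    HasDerivAt (fun x => -(x / β + 1 / β ^ 2) * Real.exp (-β * x))
      (x * Real.exp (-β * x)) x := by
  have h1 : HasDerivAt (fun x : ℝ => -(x / β + 1 / β ^ 2)) (-(1 / β)) x := by
    exact (((hasDerivAt_id x).div_const β).add_const (1 / β ^ 2)).neg
  have h2 : HasDerivAt (fun x : ℝ => Real.exp (-β * x)) (Real.exp (-β * x) * (-β)) x := by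
    simpa using ((hasDerivAt_id x).const_mul (-β)).exp
  have h := h1.mul h2
  refine h.congr_deriv ?_
  field_simp
  ring

lemma intX {β : ℝ} (hβ : 0 < β) {y : ℝ} (hy : 0 ≤ y) :
    IntegrableOn (fun x => x * Real.exp (-β * x)) (Ioi y) volume ∧
    ∫ x in Ioi y, x * Real.exp (-β * x)
      = (y / β + 1 / β ^ 2) * Real.exp (-β * y) := by
  have hcont : ContinuousWithinAt
      (fun x => -(x / β + 1 / β ^ 2) * Real.exp (-β * x)) (Ici y) y :=
    (Continuous.continuousWithinAt (by continuity))
  have hderiv : ∀ x ∈ Ioi y, HasDerivAt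
      (fun x => -(x / β + 1 / β ^ 2) * Real.exp (-β * x))
      (x * Real.exp (-β * x)) x := fun x _ => hasDeriv_F hβ.ne' x
  have hpos : ∀ x ∈ Ioi y, 0 ≤ x * Real.exp (-β * x) := fun x hx =>
    mul_nonneg (le_trans hy (le_of_lt hx)) (Real.exp_pos _).le
  have t0 : Tendsto (fun x : ℝ => Real.exp (-β * x)) atTop (nhds 0) := by
    have := Real.tendsto_exp_neg_atTop_nhds_zero.comp
      (tendsto_id.const_mul_atTop hβ)
    refine this.congr fun x => ?_
    simp [Function.comp, neg_mul]
  have t1 : Tendsto (fun x : ℝ => x * Real.exp (-β * x)) atTop (nhds 0) := by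
    have h := (Real.tendsto_pow_mul_exp_neg_atTop_nhds_zero 1).comp
      (tendsto_id.const_mul_atTop hβ)
    have h2 := h.const_mul (1 / β)
    rw [mul_zero] at h2
    refine h2.congr fun x => ?_
    simp only [Function.comp, pow_one, id]
    field_simp
  have htend : Tendsto (fun x => -(x / β + 1 / β ^ 2) * Real.exp (-β * x))
      atTop (nhds 0) := by
    have h := (t1.const_mul (-(1 / β))).add (t0.const_mul (-(1 / β ^ 2)))
    simp only [mul_zero, add_zero] at h
    refine h.congr fun x => ?_
    ring
  refine ⟨integrableOn_Ioi_deriv_of_nonneg hcont hderiv hpos htend, ?_⟩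
  rw [integral_Ioi_of_hasDerivAt_of_nonneg hcont hderiv hpos htend]
  ring

lemma intExpI {γ : ℝ} (hγ : γ ≠ 0) (z : ℝ) :
    ∫ y in (0:ℝ)..z, Real.exp (γ * y) = (Real.exp (γ * z) - 1) / γ := by
  have hd : ∀ y ∈ uIcc (0:ℝ) z,
      HasDerivAt (fun y => Real.exp (γ * y) / γ) (Real.exp (γ * y)) y := by
    intro y _
    have := (((hasDerivAt_id y).const_mul γ).exp).div_const γ
    simpa [mul_comm, mul_div_assoc, hγ] using this
  rw [intervalIntegral.integral_eq_sub_of_hasDerivAt hd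
    (Continuous.intervalIntegrable (by continuity) _ _)]
  rw [mul_zero, Real.exp_zero]
  ring

lemma intYExpI {γ : ℝ} (hγ : γ ≠ 0) (z : ℝ) :
    ∫ y in (0:ℝ)..z, y * Real.exp (γ * y)
      = (z / γ - 1 / γ ^ 2) * Real.exp (γ * z) + 1 / γ ^ 2 := by
  have hd : ∀ y ∈ uIcc (0:ℝ) z,
      HasDerivAt (fun y => (y / γ - 1 / γ ^ 2) * Real.exp (γ * y))
        (y * Real.exp (γ * y)) y := by
    intro y _
    have h1 : HasDerivAt (fun y : ℝ => y / γ - 1 / γ ^ 2) (1 / γ) y := by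
      exact ((hasDerivAt_id y).div_const γ).sub_const (1 / γ ^ 2)
    have h2 : HasDerivAt (fun y : ℝ => Real.exp (γ * y)) (Real.exp (γ * y) * γ) y := by
      simpa [mul_comm] using ((hasDerivAt_id y).const_mul γ).exp
    have h := h1.mul h2
    refine h.congr_deriv ?_
    field_simp
    ring
  rw [intervalIntegral.integral_eq_sub_of_hasDerivAt hd
    (Continuous.intervalIntegrable (by continuity) _ _)]
  rw [mul_zero, Real.exp_zero]
  field_simp
  ring

lemma algebra_final (c D γ M : ℝ) (hc0 : c ≠ 0) (hD0 : D ≠ 0) (hγ' : γ ≠ 0)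
    (hcD' : c - D * γ ≠ 0) :
    c / D / c / ((c / D - γ) * γ) * M
      + (c / D / c / ((c / D - γ) ^ 2 * γ) - c / D / c / ((c / D - γ) * γ ^ 2))
        * (c * γ - D * γ ^ 2)
      = (M - c + 2 * D * γ) / (γ * (c - D * γ)) := by
  have h1 : c / D - γ = (c - D * γ) / D := by field_simp
  rw [h1]
  field_simp
  ring

lemma kDens_nonneg {c D : ℝ} (hc : 0 < c) (hD : 0 < D) (t : ℝ) :
    0 ≤ kDens c D t := by
  unfold kDens
  positivity

lemma kDens_cont (c D : ℝ) : Continuous fun t : ℝ => kDens c D t := by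
  unfold kDens
  continuity

lemma meas_nuTail (ν : Measure ℝ) : Measurable fun y : ℝ => nuTail ν y :=
  (meas_tail ν).ennreal_toReal

set_option maxHeartbeats 1000000 in
/-- The mean of the exponentially tilted renewal density equals
`μ = (∫₀^∞ z e^{γz} ν(dz) − c + 2Dγ) / (γ (c − Dγ))` when the Lundberg identity holds. -/
theorem tilted_kernel_mean
    (c D γ : ℝ) (hc : 0 < c) (hD : 0 < D)
    (ν : Measure ℝ) [SigmaFinite ν]
    (hγ0 : 0 < γ) (hγ : γ < c / D)
    (hint : IntegrableOn (fun z => z * Real.exp (γ * z)) (Ioi (0 : ℝ)) ν)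
    (hlund : c * γ - D * γ ^ 2 = ∫ z in Ioi (0 : ℝ), (Real.exp (γ * z) - 1) ∂ν) :
    (∫ x in Ioi (0 : ℝ), x * Real.exp (γ * x) * renKer c D ν x)
      = ((∫ z in Ioi (0 : ℝ), z * Real.exp (γ * z) ∂ν) - c + 2 * D * γ)
        / (γ * (c - D * γ)) := by
  have hc0 : c ≠ 0 := hc.ne'
  have hD0 : D ≠ 0 := hD.ne'
  have hδ : 0 < c / D := div_pos hc hD
  set β : ℝ := c / D - γ with hβdef
  have hβ : 0 < β := sub_pos.2 hγ
  have hcD : 0 < c - D * γ := by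
    have h2 : γ * D < (c / D) * D := mul_lt_mul_of_pos_right hγ hD
    rw [div_mul_cancel₀ c hD0] at h2
    linarith
  set M : ℝ := ∫ z in Ioi (0:ℝ), z * Real.exp (γ * z) ∂ν with hMdef
  set a : ℝ := (c / D) / c / (β * γ) with hadef
  set b : ℝ := (c / D) / c / (β ^ 2 * γ) - (c / D) / c / (β * γ ^ 2) with hbdef
  clear_value β M a b
  -- the product-space kernel
  set K : ℝ × ℝ → ℝ≥0∞ := fun p =>
    ({q : ℝ × ℝ | 0 < q.2 ∧ q.2 ≤ q.1}).indicator
      (fun q => ENNReal.ofReal (kDens c D (q.1 - q.2)) * ν (Ioi q.2)) p with hKdef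
  have hKmeas : Measurable K := by
    refine Measurable.indicator ?_ ?_
    · exact (((kDens_cont c D).comp (continuous_fst.sub continuous_snd)).measurable.ennreal_ofReal).mul
        ((meas_tail ν).comp measurable_snd)
    · exact (measurableSet_lt measurable_const measurable_snd).inter
        (measurableSet_le measurable_snd measurable_fst)
  set G : ℝ → ℝ≥0∞ := fun x => ∫⁻ y, K (x, y) ∂volume with hGdef
  have hGmeas : Measurable G := Measurable.lintegral_prod_right hKmeas
  have hK1 : ∀ x y : ℝ, K (x, y)
      = (Ioc 0 x).indicator (fun y => ENNReal.ofReal (kDens c D (x - y)) * ν (Ioi y)) y := by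
    intro x y
    by_cases h : 0 < y ∧ y ≤ x
    · simp [hKdef, Set.indicator_apply, Set.mem_Ioc, h, h.1, h.2]
    · simp [hKdef, Set.indicator_apply, Set.mem_Ioc, h]
  have hGrepr : ∀ x : ℝ, G x
      = ∫⁻ y in Ioc 0 x, ENNReal.ofReal (kDens c D (x - y)) * ν (Ioi y) := by
    intro x
    rw [hGdef]
    simp_rw [hK1]
    rw [lintegral_indicator measurableSet_Ioc]
  have hGfin : ∀ x : ℝ, G x < ⊤ := by
    intro x
    have hb1 : ∫⁻ y in Ioc 0 x, ENNReal.ofReal (kDens c D (x - y)) * ν (Ioi y)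
        ≤ ∫⁻ y in Ioc 0 x, ENNReal.ofReal (c / D) * ν (Ioi y) := by
      refine setLIntegral_mono' measurableSet_Ioc fun y hy => ?_
      refine mul_le_mul_left (ENNReal.ofReal_le_ofReal ?_) _
      unfold kDens
      refine mul_le_of_le_one_right hδ.le ?_
      refine Real.exp_le_one_iff.mpr ?_
      have : 0 ≤ x - y := sub_nonneg.2 hy.2
      nlinarith [hδ]
    have htb : ∫⁻ y in Ioc 0 x, ν (Ioi y) ≤ ∫⁻ z in Ioi (0:ℝ), ENNReal.ofReal z ∂ν := by
      have e1 : ∫⁻ y in Ioi (0:ℝ), (Ioc 0 x).indicator (fun _ => (1:ℝ≥0∞)) y * ν (Ioi y)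
          = ∫⁻ y in Ioc 0 x, ν (Ioi y) := by
        have hpt : ∀ y : ℝ, (Ioc 0 x).indicator (fun _ => (1:ℝ≥0∞)) y * ν (Ioi y)
            = (Ioc 0 x).indicator (fun y => ν (Ioi y)) y := by
          intro y
          by_cases h : y ∈ Ioc 0 x <;> simp [Set.indicator_apply, h]
        simp_rw [hpt]
        rw [lintegral_indicator measurableSet_Ioc,
          Measure.restrict_restrict measurableSet_Ioc,
          Set.inter_eq_left.mpr Set.Ioc_subset_Ioi_self]
      rw [← e1, swap_tail ν (measurable_const.indicator measurableSet_Ioc)]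
      refine setLIntegral_mono' measurableSet_Ioi fun z hz => ?_
      calc ∫⁻ y in Ioo 0 z, (Ioc 0 x).indicator (fun _ => (1:ℝ≥0∞)) y
          ≤ ∫⁻ _ in Ioo (0:ℝ) z, (1:ℝ≥0∞) := by
            refine lintegral_mono fun y => ?_
            by_cases h : y ∈ Ioc 0 x <;> simp [Set.indicator_apply, h]
        _ = volume (Ioo (0:ℝ) z) := setLIntegral_one _
        _ = ENNReal.ofReal z := by rw [Real.volume_Ioo, sub_zero]
    calc G x = ∫⁻ y in Ioc 0 x, ENNReal.ofReal (kDens c D (x - y)) * ν (Ioi y) := hGrepr x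
      _ ≤ ∫⁻ y in Ioc 0 x, ENNReal.ofReal (c / D) * ν (Ioi y) := hb1
      _ = ENNReal.ofReal (c / D) * ∫⁻ y in Ioc 0 x, ν (Ioi y) :=
          lintegral_const_mul _ (meas_tail ν)
      _ ≤ ENNReal.ofReal (c / D) * ∫⁻ z in Ioi (0:ℝ), ENNReal.ofReal z ∂ν :=
          mul_le_mul_right htb _
      _ < ⊤ := ENNReal.mul_lt_top ENNReal.ofReal_lt_top (lint_z_lt_top hγ0 hint)
  -- pointwise rewrite of the integrand
  have hE1 : ∀ x ∈ Ioi (0:ℝ), x * Real.exp (γ * x) * renKer c D ν x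
      = (x * Real.exp (γ * x) * (1 / c)) * (G x).toReal := by
    intro x hx
    have hx0 : (0:ℝ) < x := hx
    have hmeasI : AEStronglyMeasurable (fun y => kDens c D (x - y) * nuTail ν y)
        (volume.restrict (Ioc 0 x)) :=
      ((((kDens_cont c D).comp (continuous_const.sub continuous_id)).measurable).mul
        (meas_nuTail ν)).aestronglyMeasurable
    have hnn : 0 ≤ᵐ[volume.restrict (Ioc 0 x)] fun y => kDens c D (x - y) * nuTail ν y :=
      Filter.Eventually.of_forall fun y =>
        mul_nonneg (kDens_nonneg hc hD _) ENNReal.toReal_nonneg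
    have hint1 : ∫ y in (0:ℝ)..x, kDens c D (x - y) * nuTail ν y = (G x).toReal := by
      rw [intervalIntegral.integral_of_le hx0.le,
        integral_eq_lintegral_of_nonneg_ae hnn hmeasI]
      congr 1
      rw [hGrepr]
      refine setLIntegral_congr_fun measurableSet_Ioc
        (fun y hy => ?_)
      rw [ENNReal.ofReal_mul (kDens_nonneg hc hD _)]
      congr 1
      exact ENNReal.ofReal_toReal (tail_lt_top hγ0 hint hy.1).ne
    rw [renKer, hint1]
    ring
  -- step 1: the integral as a lower integral
  have hμrepr : (∫ x in Ioi (0:ℝ), x * Real.exp (γ * x) * renKer c D ν x)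
      = (∫⁻ x in Ioi (0:ℝ), ENNReal.ofReal (x * Real.exp (γ * x) * (1 / c)) * G x).toReal := by
    rw [setIntegral_congr_fun measurableSet_Ioi hE1]
    have hnn : 0 ≤ᵐ[volume.restrict (Ioi (0:ℝ))]
        fun x => (x * Real.exp (γ * x) * (1 / c)) * (G x).toReal := by
      refine (ae_restrict_iff' measurableSet_Ioi).2 (Filter.Eventually.of_forall fun x hx => ?_)
      have hx0 : (0:ℝ) < x := hx
      have h1 : 0 ≤ x * Real.exp (γ * x) * (1 / c) := by positivity
      exact mul_nonneg h1 ENNReal.toReal_nonneg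
    have hmeas2 : AEStronglyMeasurable
        (fun x => (x * Real.exp (γ * x) * (1 / c)) * (G x).toReal)
        (volume.restrict (Ioi (0:ℝ))) := by
      refine Measurable.aestronglyMeasurable ?_
      exact ((measurable_id.mul
        ((Real.continuous_exp.comp (continuous_const.mul continuous_id)).measurable)).mul
        measurable_const).mul hGmeas.ennreal_toReal
    rw [integral_eq_lintegral_of_nonneg_ae hnn hmeas2]
    congr 1
    refine setLIntegral_congr_fun measurableSet_Ioi
      (fun x hx => ?_)
    have hx0 : (0:ℝ) < x := hx
    rw [ENNReal.ofReal_mul (by positivity), ENNReal.ofReal_toReal (hGfin x).ne]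
  -- step 2: Tonelli in (x, y)
  have hswap1 : (∫⁻ x in Ioi (0:ℝ), ENNReal.ofReal (x * Real.exp (γ * x) * (1 / c)) * G x)
      = ∫⁻ y, ∫⁻ x in Ioi (0:ℝ),
          ENNReal.ofReal (x * Real.exp (γ * x) * (1 / c)) * K (x, y) ∂volume ∂volume := by
    have hme : Measurable fun p : ℝ × ℝ =>
        ENNReal.ofReal (p.1 * Real.exp (γ * p.1) * (1 / c)) * K p := by
      refine Measurable.mul ?_ hKmeas
      exact ((measurable_fst.mul
        ((Real.continuous_exp.comp (continuous_const.mul continuous_id)).measurable.comp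
          measurable_fst)).mul measurable_const).ennreal_ofReal
    calc (∫⁻ x in Ioi (0:ℝ), ENNReal.ofReal (x * Real.exp (γ * x) * (1 / c)) * G x)
        = ∫⁻ x in Ioi (0:ℝ), ∫⁻ y,
            ENNReal.ofReal (x * Real.exp (γ * x) * (1 / c)) * K (x, y) ∂volume ∂volume := by
          refine lintegral_congr fun x => ?_
          rw [hGdef]
          exact (lintegral_const_mul _ (hKmeas.comp measurable_prodMk_left)).symm
      _ = _ := lintegral_lintegral_swap hme.aemeasurable
  -- step 3: the inner x-integral in closed form
  have hinner : ∀ y : ℝ,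
      (∫⁻ x in Ioi (0:ℝ), ENNReal.ofReal (x * Real.exp (γ * x) * (1 / c)) * K (x, y) ∂volume)
      = (Ioi (0:ℝ)).indicator
          (fun y => ENNReal.ofReal ((c / D) / c * (y / β + 1 / β ^ 2) * Real.exp (γ * y))
            * ν (Ioi y)) y := by
    intro y
    by_cases hy : 0 < y
    · have hK2 : ∀ x : ℝ, K (x, y)
          = (Ici y).indicator (fun x => ENNReal.ofReal (kDens c D (x - y)) * ν (Ioi y)) x := by
        intro x
        by_cases h : y ≤ x <;> simp [hKdef, Set.indicator_apply, Set.mem_Ici, h, hy]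
      have hfun : (fun x => (x * Real.exp (γ * x) * (1 / c)) * kDens c D (x - y))
          = fun x => ((c / D) / c * Real.exp ((c / D) * y)) * (x * Real.exp (-β * x)) := by
        funext x
        have hE : Real.exp (γ * x) * Real.exp (-(c / D) * (x - y))
            = Real.exp ((c / D) * y) * Real.exp (-β * x) := by
          rw [← Real.exp_add, ← Real.exp_add]
          congr 1
          rw [hβdef]; ring
        unfold kDens
        linear_combination (x * (c / D) * (1 / c)) * hE
      have hIntX := intX hβ hy.le
      have hInt : IntegrableOn
          (fun x => (x * Real.exp (γ * x) * (1 / c)) * kDens c D (x - y)) (Ioi y) volume := by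
        rw [hfun]
        exact hIntX.1.const_mul _
      have hval : ∫ x in Ioi y, (x * Real.exp (γ * x) * (1 / c)) * kDens c D (x - y)
          = (c / D) / c * (y / β + 1 / β ^ 2) * Real.exp (γ * y) := by
        rw [hfun, integral_const_mul, hIntX.2]
        have hE2 : Real.exp ((c / D) * y) * Real.exp (-β * y) = Real.exp (γ * y) := by
          rw [← Real.exp_add]
          congr 1
          rw [hβdef]; ring
        linear_combination ((c / D) / c * (y / β + 1 / β ^ 2)) * hE2
      have hnn2 : 0 ≤ᵐ[volume.restrict (Ioi y)]
          fun x => (x * Real.exp (γ * x) * (1 / c)) * kDens c D (x - y) := by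
        refine (ae_restrict_iff' measurableSet_Ioi).2
          (Filter.Eventually.of_forall fun x hx => ?_)
        have hx0 : (0:ℝ) < x := lt_trans hy hx
        exact mul_nonneg (by positivity) (kDens_nonneg hc hD _)
      calc ∫⁻ x in Ioi (0:ℝ), ENNReal.ofReal (x * Real.exp (γ * x) * (1 / c)) * K (x, y) ∂volume
          = ∫⁻ x in Ioi (0:ℝ), (Ici y).indicator
              (fun x => ENNReal.ofReal (x * Real.exp (γ * x) * (1 / c))
                * (ENNReal.ofReal (kDens c D (x - y)) * ν (Ioi y))) x ∂volume := by
            refine lintegral_congr fun x => ?_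
            rw [hK2 x]
            by_cases h : x ∈ Ici y <;> simp [Set.indicator_apply, h]
        _ = ∫⁻ x in Ici y, ENNReal.ofReal (x * Real.exp (γ * x) * (1 / c))
              * (ENNReal.ofReal (kDens c D (x - y)) * ν (Ioi y)) ∂volume := by
            have hsub : Ici y ∩ Ioi (0:ℝ) = Ici y :=
              Set.inter_eq_left.mpr fun x hx => lt_of_lt_of_le hy hx
            rw [lintegral_indicator measurableSet_Ici,
              Measure.restrict_restrict measurableSet_Ici, hsub]
        _ = ∫⁻ x in Ioi y, ENNReal.ofReal (x * Real.exp (γ * x) * (1 / c))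
              * (ENNReal.ofReal (kDens c D (x - y)) * ν (Ioi y)) ∂volume :=
            (setLIntegral_congr Ioi_ae_eq_Ici).symm
        _ = (∫⁻ x in Ioi y, ENNReal.ofReal
              ((x * Real.exp (γ * x) * (1 / c)) * kDens c D (x - y)) ∂volume) * ν (Ioi y) := by
            have hmf : Measurable fun x : ℝ => ENNReal.ofReal
                (x * Real.exp (γ * x) * (1 / c) * kDens c D (x - y)) := by
              refine Measurable.ennreal_ofReal (Continuous.measurable ?_)
              exact ((continuous_id.mul
                (Real.continuous_exp.comp (continuous_const.mul continuous_id))).mul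
                continuous_const).mul
                ((kDens_cont c D).comp (continuous_id.sub continuous_const))
            rw [← lintegral_mul_const _ hmf]
            refine setLIntegral_congr_fun measurableSet_Ioi
              (fun x hx => ?_)
            have hx0 : (0:ℝ) < x := lt_trans hy hx
            have h1 : (0:ℝ) ≤ x * Real.exp (γ * x) * (1 / c) := by positivity
            rw [← mul_assoc, ← ENNReal.ofReal_mul h1]
        _ = ENNReal.ofReal ((c / D) / c * (y / β + 1 / β ^ 2) * Real.exp (γ * y)) * ν (Ioi y) := by
            rw [← ofReal_integral_eq_lintegral_ofReal hInt hnn2, hval]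
        _ = (Ioi (0:ℝ)).indicator
              (fun y => ENNReal.ofReal ((c / D) / c * (y / β + 1 / β ^ 2) * Real.exp (γ * y))
                * ν (Ioi y)) y := by
            rw [Set.indicator_of_mem (Set.mem_Ioi.mpr hy)]
    · have hK0 : ∀ x : ℝ, K (x, y) = 0 := by
        intro x
        simp [hKdef, Set.indicator_apply, hy]
      simp [hK0, Set.indicator_of_notMem (fun h => hy (Set.mem_Ioi.mp h))]
  -- step 4: swap with ν and evaluate
  have hφmeas : Measurable fun y : ℝ =>
      ENNReal.ofReal ((c / D) / c * (y / β + 1 / β ^ 2) * Real.exp (γ * y)) := by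
    refine Measurable.ennreal_ofReal ?_
    exact ((measurable_const.mul ((measurable_id.div_const β).add_const (1 / β ^ 2))).mul
      (Real.continuous_exp.comp (continuous_const.mul continuous_id)).measurable)
  have hval2 : ∀ z ∈ Ioi (0:ℝ),
      ∫ y in Ioo (0:ℝ) z, (c / D) / c * (y / β + 1 / β ^ 2) * Real.exp (γ * y)
        = a * (z * Real.exp (γ * z)) + b * (Real.exp (γ * z) - 1) := by
    intro z hz
    have hz0 : (0:ℝ) < z := hz
    rw [← MeasureTheory.integral_Ioc_eq_integral_Ioo,
      ← intervalIntegral.integral_of_le hz0.le]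
    have hsplit : ∀ y : ℝ, (c / D) / c * (y / β + 1 / β ^ 2) * Real.exp (γ * y)
        = ((c / D) / c / β) * (y * Real.exp (γ * y))
          + ((c / D) / c / β ^ 2) * Real.exp (γ * y) := by
      intro y
      field_simp
    simp_rw [hsplit]
    have hi1 : IntervalIntegrable (fun y : ℝ => (c / D) / c / β * (y * Real.exp (γ * y)))
        volume 0 z :=
      Continuous.intervalIntegrable (continuous_const.mul (continuous_id.mul
        (Real.continuous_exp.comp (continuous_const.mul continuous_id)))) _ _
    have hi2 : IntervalIntegrable (fun y : ℝ => (c / D) / c / β ^ 2 * Real.exp (γ * y))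
        volume 0 z :=
      Continuous.intervalIntegrable (continuous_const.mul
        (Real.continuous_exp.comp (continuous_const.mul continuous_id))) _ _
    rw [intervalIntegral.integral_add hi1 hi2,
      intervalIntegral.integral_const_mul, intervalIntegral.integral_const_mul,
      intYExpI hγ0.ne', intExpI hγ0.ne', hadef, hbdef]
    field_simp
    ring
  have hφnnIoo : ∀ z : ℝ, 0 ≤ᵐ[volume.restrict (Ioo (0:ℝ) z)]
      fun y => (c / D) / c * (y / β + 1 / β ^ 2) * Real.exp (γ * y) := by
    intro z
    refine (ae_restrict_iff' measurableSet_Ioo).2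
      (Filter.Eventually.of_forall fun y hy => ?_)
    have hy0 : (0:ℝ) < y := hy.1
    positivity
  have hIntφ : ∀ z : ℝ, IntegrableOn
      (fun y => (c / D) / c * (y / β + 1 / β ^ 2) * Real.exp (γ * y)) (Ioo 0 z) volume :=
    fun z => (Continuous.integrableOn_Ioc ((continuous_const.mul
      ((continuous_id.div_const β).add continuous_const)).mul
      (Real.continuous_exp.comp (continuous_const.mul continuous_id)))).mono_set
      Ioo_subset_Ioc_self
  have hψ : ∀ z ∈ Ioi (0:ℝ),
      (∫⁻ y in Ioo 0 z,
        ENNReal.ofReal ((c / D) / c * (y / β + 1 / β ^ 2) * Real.exp (γ * y)))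
      = ENNReal.ofReal (a * (z * Real.exp (γ * z)) + b * (Real.exp (γ * z) - 1)) := by
    intro z hz
    rw [← ofReal_integral_eq_lintegral_ofReal (hIntφ z) (hφnnIoo z), hval2 z hz]
  have hψnn : ∀ z ∈ Ioi (0:ℝ),
      0 ≤ a * (z * Real.exp (γ * z)) + b * (Real.exp (γ * z) - 1) := by
    intro z hz
    rw [← hval2 z hz]
    refine setIntegral_nonneg measurableSet_Ioo fun y hy => ?_
    have hy0 : (0:ℝ) < y := hy.1
    positivity
  have hIntψ : IntegrableOn
      (fun z => a * (z * Real.exp (γ * z)) + b * (Real.exp (γ * z) - 1)) (Ioi 0) ν :=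
    (hint.const_mul a).add ((int_expm1 hγ0 hint).const_mul b)
  have hA4 : (∫⁻ x in Ioi (0:ℝ), ENNReal.ofReal (x * Real.exp (γ * x) * (1 / c)) * G x)
      = ENNReal.ofReal (a * M + b * (c * γ - D * γ ^ 2)) := by
    rw [hswap1]
    have : (∫⁻ y, ∫⁻ x in Ioi (0:ℝ),
        ENNReal.ofReal (x * Real.exp (γ * x) * (1 / c)) * K (x, y) ∂volume ∂volume)
        = ∫⁻ y in Ioi (0:ℝ),
            ENNReal.ofReal ((c / D) / c * (y / β + 1 / β ^ 2) * Real.exp (γ * y))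
              * ν (Ioi y) := by
      simp_rw [hinner]
      rw [lintegral_indicator measurableSet_Ioi]
    rw [this, swap_tail ν hφmeas,
      setLIntegral_congr_fun measurableSet_Ioi hψ,
      ← ofReal_integral_eq_lintegral_ofReal hIntψ
        ((ae_restrict_iff' measurableSet_Ioi).2 (Filter.Eventually.of_forall hψnn))]
    congr 1
    rw [integral_add (hint.const_mul a) ((int_expm1 hγ0 hint).const_mul b),
      integral_const_mul, integral_const_mul, ← hlund, ← hMdef]
  -- final arithmetic
  have hMlb : c - D * γ ≤ M := by
    have hEleγM : c * γ - D * γ ^ 2 ≤ γ * M := by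
      rw [hlund, hMdef, ← integral_const_mul]
      refine setIntegral_mono_on (int_expm1 hγ0 hint) (hint.const_mul γ)
        measurableSet_Ioi fun z hz => ?_
      have hz0 : (0:ℝ) < z := hz
      calc Real.exp (γ * z) - 1 ≤ (γ * z) * Real.exp (γ * z) :=
            exp_sub_one_le_self_mul (le_of_lt (mul_pos hγ0 hz0))
        _ = γ * (z * Real.exp (γ * z)) := by ring
    nlinarith [hγ0]
  have hfinal : a * M + b * (c * γ - D * γ ^ 2)
      = (M - c + 2 * D * γ) / (γ * (c - D * γ)) := by
    rw [hadef, hbdef, hβdef]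
    exact algebra_final c D γ M hc0 hD0 hγ0.ne' hcD.ne'
  have hsign : 0 ≤ a * M + b * (c * γ - D * γ ^ 2) := by
    rw [hfinal]
    have h1 : 0 ≤ M - c + 2 * D * γ := by linarith [hMlb, mul_pos hD hγ0]
    positivity
  rw [hμrepr, hA4, ENNReal.toReal_ofReal hsign, hfinal]
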